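/- In the Baumslag group G_(1,2), set t = b a b⁻¹ and define recursively T(0) = t and T(n+1) = b · T(n) · a · T(n)⁻¹ · b⁻¹. Then for every n ∈ ℕ, T(n) = t^{tow(n)} in G_(1,2). -/

import Mathlib

/-- The single relator `(b a b⁻¹) a (b a b⁻¹)⁻¹ a⁻²` of the Baumslag group G_(1,2),
with `a` the generator of index `0` and `b` the generator of index `1`. -/
def baumRels : Set (FreeGroup (Fin 2)) :=
  {(FreeGroup.of 1 * FreeGroup.of 0 * (FreeGroup.of 1)⁻¹) * FreeGroup.of 0 *
      (FreeGroup.of 1 * FreeGroup.of 0 * (FreeGroup.of 1)⁻¹)⁻¹ *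
      (FreeGroup.of 0 * FreeGroup.of 0)⁻¹}

/-- The Baumslag group G_(1,2) = ⟨a, b ∣ (b a b⁻¹) a (b a b⁻¹)⁻¹ = a²⟩. -/
abbrev Baumslag : Type := PresentedGroup baumRels

/-- The generator `a` of the Baumslag group. -/
def bgA : Baumslag := PresentedGroup.of 0

/-- The generator `b` of the Baumslag group. -/
def bgB : Baumslag := PresentedGroup.of 1

/-- The element `t = b a b⁻¹` of the Baumslag group. -/
def bgT : Baumslag := bgB * bgA * bgB⁻¹

/-- The tower function: tow(0) = 1, tow(i+1) = 2^tow(i). -/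
def tow : ℕ → ℕ
  | 0 => 1
  | n + 1 => 2 ^ tow n

/-- The sequence T(0) = t, T(n+1) = b·T(n)·a·T(n)⁻¹·b⁻¹ in the Baumslag group. -/
def Tseq : ℕ → Baumslag
  | 0 => bgT
  | n + 1 => bgB * Tseq n * bgA * (Tseq n)⁻¹ * bgB⁻¹

lemma bg_rel : bgT * bgA * bgT⁻¹ = bgA * bgA := by
  have h : (PresentedGroup.mk baumRels ((FreeGroup.of 1 * FreeGroup.of 0 * (FreeGroup.of 1)⁻¹) * FreeGroup.of 0 *
      (FreeGroup.of 1 * FreeGroup.of 0 * (FreeGroup.of 1)⁻¹)⁻¹ *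
      (FreeGroup.of 0 * FreeGroup.of 0)⁻¹ : FreeGroup (Fin 2)) : Baumslag) = 1 := by
    apply (QuotientGroup.eq_one_iff _).mpr
    exact Subgroup.subset_normalClosure rfl
  have h' : bgT * bgA * bgT⁻¹ * (bgA * bgA)⁻¹ = 1 := by
    simpa [bgT, bgA, bgB, PresentedGroup.of, QuotientGroup.mk_mul, QuotientGroup.mk_inv,
      mul_assoc] using h
  have := mul_inv_eq_one.mp h'
  exact this

lemma bg_conj_pow (k : ℕ) : bgT ^ k * bgA * (bgT ^ k)⁻¹ = bgA ^ (2 ^ k) := by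
  induction k with
  | zero => simp
  | succ k ih =>
    have : bgT ^ (k+1) * bgA * (bgT ^ (k+1))⁻¹
        = bgT * (bgT ^ k * bgA * (bgT ^ k)⁻¹) * bgT⁻¹ := by
      rw [pow_succ']
      group
    rw [this, ih]
    have hconj : ∀ m : ℕ, bgT * bgA ^ m * bgT⁻¹ = (bgT * bgA * bgT⁻¹) ^ m := by
      intro m
      rw [← conj_pow]
    rw [hconj, bg_rel, ← pow_two, ← pow_mul, pow_succ, mul_comm 2]

lemma bg_b_conj_pow (m : ℕ) : bgB * bgA ^ m * bgB⁻¹ = bgT ^ m := by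
  rw [← conj_pow]; rfl

/-- In the Baumslag group, `T(n) = t^{tow(n)}` for every `n`. -/
theorem Tseq_eq_pow_tow (n : ℕ) : Tseq n = bgT ^ tow n := by
  induction n with
  | zero => simp [Tseq, tow]
  | succ n ih =>
    show bgB * Tseq n * bgA * (Tseq n)⁻¹ * bgB⁻¹ = bgT ^ tow (n+1)
    rw [ih]
    have : bgB * bgT ^ tow n * bgA * (bgT ^ tow n)⁻¹ * bgB⁻¹
        = bgB * (bgT ^ tow n * bgA * (bgT ^ tow n)⁻¹) * bgB⁻¹ := by group
    rw [this, bg_conj_pow, bg_b_conj_pow]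
    rfl
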